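/- Let N ≥ 1 and let p_{ij}, d_{ij} : ℝ^N → ℝ (1 ≤ i,j ≤ N) be nonnegative, twice continuously differentiable functions with p_{ij}(z) = d_{ji}(z) and p_{ii}(z) = d_{ii}(z) = 0 for all z. Set P_i = Σ_j p_{ij}, D_i = Σ_j d_{ij}. Let y : [t_n, t_n + T] → ℝ^N solve y_i' = P_i(y) − D_i(y) with y(t_n) = yⁿ, all yⁿ_i > 0. Let a21, b1, b2 ≥ 0 with b1 + b2 = 1 and a21·b2 = 1/2. Suppose π, σ : (0,T) → ℝ^N take positive values and satisfy π_i(Δt) = yⁿ_i + O(Δt) and σ_i(Δt) = yⁿ_i + Δt·(P_i(yⁿ) − D_i(yⁿ)) + O(Δt²) as Δt → 0⁺. Define Y2 : (0,T) → ℝ^N by the explicit formula Y2_i(Δt) = (yⁿ_i + a21·Δt·P_i(yⁿ)) / (1 + a21·Δt·D_i(yⁿ)/π_i(Δt)), and suppose Y : (0,T) → ℝ^N satisfies, for every Δt ∈ (0,T) and every i, Y_i = yⁿ_i + Δt Σ_j ( (b1·p_{ij}(yⁿ) + b2·p_{ij}(Y2))·Y_j/σ_j − (b1·d_{ij}(yⁿ)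 + b2·d_{ij}(Y2))·Y_i/σ_i ). Then Y_i(Δt) = y_i(t_n + Δt) + O(Δt³) as Δt → 0⁺ for every i. (Sufficiency of the order conditions for second-order accuracy of two-stage MPRK schemes with non-conservative stage, δ = 0.) -/

import Mathlib

/-- `f(Δt) = O(Δt^m)` as `Δt → 0⁺`. -/
def BigOAtZero (f : ℝ → ℝ) (m : ℕ) : Prop :=
  ∃ C > 0, ∃ δ > 0, ∀ t : ℝ, 0 < t → t < δ → |f t| ≤ C * t ^ m

namespace BigOAtZero

theorem of_le {f g : ℝ → ℝ} {m : ℕ} {δ₀ : ℝ} (hδ₀ : 0 < δ₀)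
    (hle : ∀ t, 0 < t → t < δ₀ → |f t| ≤ |g t|) (hg : BigOAtZero g m) :
    BigOAtZero f m := by
  obtain ⟨C, hC, δ, hδ, h⟩ := hg
  exact ⟨C, hC, min δ δ₀, lt_min hδ hδ₀, fun t ht htδ =>
    (hle t ht (htδ.trans_le (min_le_right _ _))).trans
      (h t ht (htδ.trans_le (min_le_left _ _)))⟩

theorem congr {f g : ℝ → ℝ} {m : ℕ} {δ₀ : ℝ} (hδ₀ : 0 < δ₀)
    (he : ∀ t, 0 < t → t < δ₀ → f t = g t) (hg : BigOAtZero g m) :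
    BigOAtZero f m :=
  of_le hδ₀ (fun t ht htδ => (he t ht htδ).symm ▸ le_rfl) hg

theorem add {f g : ℝ → ℝ} {m : ℕ} (hf : BigOAtZero f m) (hg : BigOAtZero g m) :
    BigOAtZero (fun t => f t + g t) m := by
  obtain ⟨C, hC, δ, hδ, h⟩ := hf
  obtain ⟨C', hC', δ', hδ', h'⟩ := hg
  refine ⟨C + C', by positivity, min δ δ', lt_min hδ hδ', fun t ht htδ => ?_⟩
  calc |f t + g t| ≤ |f t| + |g t| := abs_add_le _ _
    _ ≤ C * t ^ m + C' * t ^ m :=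
        add_le_add (h t ht (htδ.trans_le (min_le_left _ _)))
          (h' t ht (htδ.trans_le (min_le_right _ _)))
    _ = (C + C') * t ^ m := by ring

theorem neg {f : ℝ → ℝ} {m : ℕ} (hf : BigOAtZero f m) :
    BigOAtZero (fun t => -f t) m := by
  obtain ⟨C, hC, δ, hδ, h⟩ := hf
  exact ⟨C, hC, δ, hδ, fun t ht htδ => by rw [abs_neg]; exact h t ht htδ⟩

theorem sub {f g : ℝ → ℝ} {m : ℕ} (hf : BigOAtZero f m) (hg : BigOAtZero g m) :
    BigOAtZero (fun t => f t - g t) m := by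
  have := hf.add hg.neg
  simpa [sub_eq_add_neg] using this

theorem mul {f g : ℝ → ℝ} {m k : ℕ} (hf : BigOAtZero f m) (hg : BigOAtZero g k) :
    BigOAtZero (fun t => f t * g t) (m + k) := by
  obtain ⟨C, hC, δ, hδ, h⟩ := hf
  obtain ⟨C', hC', δ', hδ', h'⟩ := hg
  refine ⟨C * C', by positivity, min δ δ', lt_min hδ hδ', fun t ht htδ => ?_⟩
  have h1 := h t ht (htδ.trans_le (min_le_left _ _))
  have h2 := h' t ht (htδ.trans_le (min_le_right _ _))
  calc |f t * g t| = |f t| * |g t| := abs_mul _ _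
    _ ≤ (C * t ^ m) * (C' * t ^ k) :=
        mul_le_mul h1 h2 (abs_nonneg _) (by positivity)
    _ = C * C' * t ^ (m + k) := by rw [pow_add]; ring

theorem mono {f : ℝ → ℝ} {m k : ℕ} (hk : k ≤ m) (hf : BigOAtZero f m) :
    BigOAtZero f k := by
  obtain ⟨C, hC, δ, hδ, h⟩ := hf
  refine ⟨C, hC, min δ 1, lt_min hδ one_pos, fun t ht htδ => ?_⟩
  have h1 := h t ht (htδ.trans_le (min_le_left _ _))
  have h2 : t ^ m ≤ t ^ k :=
    pow_le_pow_of_le_one ht.le (le_of_lt (htδ.trans_le (min_le_right _ _))) hk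
  nlinarith

theorem const (c : ℝ) : BigOAtZero (fun _ => c) 0 :=
  ⟨|c| + 1, by positivity, 1, one_pos, fun t _ _ => by simp⟩

theorem const_mul {f : ℝ → ℝ} {m : ℕ} (c : ℝ) (hf : BigOAtZero f m) :
    BigOAtZero (fun t => c * f t) m := by
  have := (const c).mul hf
  simpa using this

theorem zero (m : ℕ) : BigOAtZero (fun _ => 0) m :=
  ⟨1, one_pos, 1, one_pos, fun t ht _ => by simp; positivity⟩

theorem sum {ι : Type*} {s : Finset ι} {f : ι → ℝ → ℝ} {m : ℕ}
    (h : ∀ j ∈ s, BigOAtZero (f j) m) :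
    BigOAtZero (fun t => ∑ j ∈ s, f j t) m := by
  classical
  induction s using Finset.induction with
  | empty => simpa using zero m
  | @insert a s' hx ih =>
      have h1 : BigOAtZero (fun t => f a t + ∑ j ∈ s', f j t) m :=
        (h a (Finset.mem_insert_self _ _)).add
          (ih fun j hj => h j (Finset.mem_insert_of_mem hj))
      exact congr one_pos (fun t _ _ => Finset.sum_insert hx) h1

theorem pow (m : ℕ) : BigOAtZero (fun t => t ^ m) m :=
  ⟨1, one_pos, 1, one_pos, fun t ht _ => by rw [abs_of_nonneg (by positivity)]; simp⟩

/-- eventually small -/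
theorem small {f : ℝ → ℝ} (hf : BigOAtZero f 1) {ε : ℝ} (hε : 0 < ε) :
    ∃ δ > 0, ∀ t, 0 < t → t < δ → |f t| ≤ ε := by
  obtain ⟨C, hC, δ, hδ, h⟩ := hf
  refine ⟨min δ (ε / C), lt_min hδ (by positivity), fun t ht htδ => ?_⟩
  have h1 := h t ht (htδ.trans_le (min_le_left _ _))
  have h2 : t ≤ ε / C := le_of_lt (htδ.trans_le (min_le_right _ _))
  calc |f t| ≤ C * t ^ 1 := h1
    _ ≤ C * (ε / C) := by nlinarith
    _ = ε := by field_simp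

end BigOAtZero

theorem eventually_all_fin (n : ℕ) (P : Fin n → ℝ → Prop)
    (h : ∀ i, ∃ δ > 0, ∀ t, 0 < t → t < δ → P i t) :
    ∃ δ > 0, ∀ t, 0 < t → t < δ → ∀ i, P i t := by
  induction n with
  | zero => exact ⟨1, one_pos, fun t _ _ i => i.elim0⟩
  | succ n ih =>
      obtain ⟨δ1, hδ1, h1⟩ := ih (fun i => P i.castSucc) (fun i => h i.castSucc)
      obtain ⟨δ2, hδ2, h2⟩ := h (Fin.last n)
      refine ⟨min δ1 δ2, lt_min hδ1 hδ2, fun t ht htδ i => ?_⟩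
      refine Fin.lastCases ?_ ?_ i
      · exact h2 t ht (htδ.trans_le (min_le_right _ _))
      · exact fun j => h1 t ht (htδ.trans_le (min_le_left _ _)) j


theorem lipschitz_local {E G : Type*} [NormedAddCommGroup E] [NormedSpace ℝ E]
    [NormedAddCommGroup G] [NormedSpace ℝ G] {F : E → G} (hF : ContDiff ℝ 1 F) (x : E) :
    ∃ K > 0, ∃ r > 0, ∀ u v, ‖u - x‖ ≤ r → ‖v - x‖ ≤ r → ‖F u - F v‖ ≤ K * ‖u - v‖ := by
  obtain ⟨K, t, ht, hlip⟩ := hF.contDiffAt.exists_lipschitzOnWith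
  obtain ⟨ε, hε, hball⟩ := Metric.mem_nhds_iff.mp ht
  refine ⟨(K : ℝ) + 1, by positivity, ε / 2, by positivity, fun u v hu hv => ?_⟩
  have hu' : u ∈ t := hball (by
    simp only [Metric.mem_ball, dist_eq_norm]; linarith)
  have hv' : v ∈ t := hball (by
    simp only [Metric.mem_ball, dist_eq_norm]; linarith)
  have := hlip.norm_sub_le hu' hv'
  have hn : (0:ℝ) ≤ ‖u - v‖ := norm_nonneg _
  nlinarith [this]

theorem taylor2_local {E : Type*} [NormedAddCommGroup E] [NormedSpace ℝ E]
    {G : E → ℝ} (hG : ContDiff ℝ 2 G) (x : E) :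
    ∃ C > 0, ∃ r > 0, ∀ z, ‖z - x‖ ≤ r →
      |G z - G x - fderiv ℝ G x (z - x)| ≤ C * ‖z - x‖ ^ 2 := by
  have hd1 : ContDiff ℝ 1 (fderiv ℝ G) := hG.fderiv_right (by norm_num)
  obtain ⟨K, hK, r, hr, hlip⟩ := lipschitz_local hd1 x
  refine ⟨K, hK, r, hr, fun z hz => ?_⟩
  have hdiff : ∀ w ∈ Metric.closedBall x ‖z - x‖,
      HasFDerivWithinAt G (fderiv ℝ G w) (Metric.closedBall x ‖z - x‖) w := fun w _ =>
    ((hG.differentiable (by norm_num)).differentiableAt.hasFDerivAt).hasFDerivWithinAt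
  have hbound : ∀ w ∈ Metric.closedBall x ‖z - x‖,
      ‖fderiv ℝ G w - fderiv ℝ G x‖ ≤ K * ‖z - x‖ := by
    intro w hw
    have hwx : ‖w - x‖ ≤ ‖z - x‖ := by
      simpa [dist_eq_norm] using Metric.mem_closedBall.mp hw
    have := hlip w x (hwx.trans hz) (by simpa using hr.le)
    calc ‖fderiv ℝ G w - fderiv ℝ G x‖ ≤ K * ‖w - x‖ := this
      _ ≤ K * ‖z - x‖ := by nlinarith
  have := Convex.norm_image_sub_le_of_norm_hasFDerivWithin_le' (x := x) (y := z)
    hdiff hbound (convex_closedBall x _) (Metric.mem_closedBall_self (norm_nonneg _))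
    (by simp [Metric.mem_closedBall, dist_eq_norm])
  calc |G z - G x - fderiv ℝ G x (z - x)| ≤ K * ‖z - x‖ * ‖z - x‖ := this
    _ = K * ‖z - x‖ ^ 2 := by ring

theorem taylor_comp_bound {E : Type*} [NormedAddCommGroup E] [NormedSpace ℝ E]
    {G : E → ℝ} (hG : ContDiff ℝ 2 G) (x v : E) :
    ∃ C > 0, ∃ r > 0, ∀ (u : E) (t : ℝ), ‖u - x‖ ≤ r →
      |G u - G x - t * (fderiv ℝ G x v)| ≤ C * (‖u - x‖ ^ 2 + ‖u - x - t • v‖) := by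
  obtain ⟨C1, hC1, r, hr, htay⟩ := taylor2_local hG x
  set L := fderiv ℝ G x with hL
  refine ⟨C1 + ‖L‖ + 1, by positivity, r, hr, fun u t hu => ?_⟩
  have h1 := htay u hu
  have h2 : |L (u - x) - t * L v| ≤ ‖L‖ * ‖u - x - t • v‖ := by
    have he : L (u - x) - t * L v = L (u - x - t • v) := by
      simp [map_sub, map_smul, smul_eq_mul]
    rw [he, ← Real.norm_eq_abs]
    exact L.le_opNorm _
  have h3 : |G u - G x - t * L v| ≤ |G u - G x - L (u - x)| + |L (u - x) - t * L v| := by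
    have : G u - G x - t * L v = (G u - G x - L (u - x)) + (L (u - x) - t * L v) := by ring
    rw [this]; exact abs_add_le _ _
  have hn1 : (0:ℝ) ≤ ‖u - x‖ ^ 2 := by positivity
  have hn2 : (0:ℝ) ≤ ‖u - x - t • v‖ := norm_nonneg _
  have hLn : (0:ℝ) ≤ ‖L‖ := norm_nonneg _
  nlinarith [h1, h2, h3]

theorem integrate_bound {φ w : ℝ → ℝ} {T' C : ℝ} (hC : 0 < C) {k : ℕ}
    (hφ : ∀ s ∈ Set.Icc (0:ℝ) T', HasDerivWithinAt φ (w s) (Set.Icc (0:ℝ) T') s)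
    (hφ0 : φ 0 = 0) (hw : ∀ s, 0 ≤ s → s ≤ T' → |w s| ≤ C * s ^ k) :
    ∀ t, 0 ≤ t → t ≤ T' → |φ t| ≤ C * t ^ (k + 1) := by
  intro t ht htT
  rcases eq_or_lt_of_le ht with h0 | ht'
  · simp [← h0, hφ0]
  have hsub : Set.Icc (0:ℝ) t ⊆ Set.Icc (0:ℝ) T' := Set.Icc_subset_Icc_right htT
  have hmvt := Convex.norm_image_sub_le_of_norm_hasDerivWithin_le
    (f := φ) (f' := w) (s := Set.Icc (0:ℝ) t) (C := C * t ^ k)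
    (fun s hs => (hφ s (hsub hs)).mono hsub)
    (fun s hs => by
      rw [Real.norm_eq_abs]
      exact (hw s hs.1 (hs.2.trans htT)).trans
        (by have := pow_le_pow_left₀ hs.1 hs.2 k; nlinarith))
    (convex_Icc _ _) (Set.left_mem_Icc.mpr ht) (Set.right_mem_Icc.mpr ht)
  rw [hφ0, sub_zero, sub_zero, Real.norm_eq_abs, Real.norm_eq_abs, abs_of_pos ht'] at hmvt
  calc |φ t| ≤ C * t ^ k * t := hmvt
    _ = C * t ^ (k + 1) := by ring

theorem vec_bound {n : ℕ} (w : ℝ → Fin n → ℝ) (m : ℕ)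
    (h : ∀ i, ∃ C > 0, ∃ δ > 0, ∀ t : ℝ, 0 < t → t < δ → |w t i| ≤ C * t ^ m) :
    ∃ C > 0, ∃ δ > 0, ∀ t : ℝ, 0 < t → t < δ → ‖w t‖ ≤ C * t ^ m := by
  choose C hC δ hδ hb using h
  have hCs : (0:ℝ) ≤ ∑ i, C i := Finset.sum_nonneg fun i _ => (hC i).le
  refine ⟨(∑ i, C i) + 1, by linarith, ?_⟩
  have key : ∀ i, ∃ δ' > 0, ∀ t : ℝ, 0 < t → t < δ' →
      |w t i| ≤ ((∑ i, C i) + 1) * t ^ m := by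
    intro i
    refine ⟨δ i, hδ i, fun t ht htδ => (hb i t ht htδ).trans ?_⟩
    have h1 : C i ≤ (∑ i, C i) + 1 := by
      have := Finset.single_le_sum (f := C) (fun j _ => (hC j).le) (Finset.mem_univ i)
      linarith
    have h2 : (0:ℝ) < t ^ m := pow_pos ht m
    nlinarith
  obtain ⟨δ0, hδ0, hall⟩ := eventually_all_fin n _ key
  refine ⟨δ0, hδ0, fun t ht htδ => ?_⟩
  refine (pi_norm_le_iff_of_nonneg (by positivity)).mpr fun i => ?_
  rw [Real.norm_eq_abs]
  exact hall t ht htδ i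

set_option maxHeartbeats 1000000 in
theorem exact_side {N : ℕ} (F : Fin N → (Fin N → ℝ) → ℝ) (hFC2 : ∀ i, ContDiff ℝ 2 (F i))
    (tn T : ℝ) (hT : 0 < T) (y : ℝ → Fin N → ℝ)
    (hy : ∀ i, ∀ t ∈ Set.Icc tn (tn + T),
      HasDerivWithinAt (fun s => y s i) (F i (y t)) (Set.Icc tn (tn + T)) t)
    (yn : Fin N → ℝ) (hyn : y tn = yn) (i : Fin N) :
    BigOAtZero (fun t => y (tn + t) i -
      (yn i + t * F i yn + t ^ 2 / 2 * (fderiv ℝ (F i) yn (fun j => F j yn)))) 3 := by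
  haveI : Nonempty (Fin N) := ⟨i⟩
  set J := Set.Icc (0:ℝ) T with hJ
  have hmap : Set.MapsTo (fun s => tn + s) J (Set.Icc tn (tn + T)) := by
    intro s hs
    rw [hJ, Set.mem_Icc] at hs
    show tn + s ∈ Set.Icc tn (tn + T)
    rw [Set.mem_Icc]
    exact ⟨by linarith [hs.1], by linarith [hs.2]⟩
  have hder : ∀ k : Fin N, ∀ t ∈ J, HasDerivWithinAt (fun s => y (tn + s) k)
      (F k (y (tn + t))) J t := by
    intro k t ht
    have h1 := (hy k (tn + t) (hmap ht)).comp t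
      (((hasDerivAt_id t).const_add tn).hasDerivWithinAt) hmap
    simpa [Function.comp_def] using h1
  have hcont : ContinuousOn (fun t => y (tn + t)) J :=
    continuousOn_pi.mpr fun k => fun t ht => (hder k t ht).continuousWithinAt
  have Gc : ContinuousOn (fun t => fun k => F k (y (tn + t))) J :=
    continuousOn_pi.mpr fun k => (hFC2 k).continuous.comp_continuousOn hcont
  obtain ⟨M0, hM0⟩ := isCompact_Icc.exists_bound_of_continuousOn Gc
  have hM00 : 0 ≤ M0 := le_trans (norm_nonneg _) (hM0 0 ⟨le_rfl, hT.le⟩)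
  set M := M0 + 1 with hMdef
  have hM : 0 < M := by linarith
  have hFb : ∀ k : Fin N, ∀ t ∈ J, |F k (y (tn + t))| ≤ M := by
    intro k t ht
    have h1 : ‖F k (y (tn + t))‖ ≤ ‖fun k => F k (y (tn + t))‖ :=
      norm_le_pi_norm (fun k => F k (y (tn + t))) k
    rw [Real.norm_eq_abs] at h1
    exact h1.trans ((hM0 t ht).trans (by linarith))
  -- step 1
  have step1 : ∀ k : Fin N, ∀ t, 0 ≤ t → t ≤ T → |y (tn + t) k - yn k| ≤ M * t ^ 1 := by
    intro k
    refine integrate_bound (φ := fun s => y (tn + s) k - yn k)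
      (w := fun s => F k (y (tn + s))) hM ?_ (by simp [hyn]) ?_
    · exact fun s hs => (hder k s hs).sub_const (yn k)
    · intro s hs hsT
      simpa using hFb k s ⟨hs, hsT⟩
  have step1v : ∀ t, 0 ≤ t → t ≤ T → ‖y (tn + t) - yn‖ ≤ M * t := by
    intro t ht htT
    refine (pi_norm_le_iff_of_nonneg (by positivity)).mpr fun k => ?_
    have := step1 k t ht htT
    simpa [Real.norm_eq_abs] using this
  -- uniform Lipschitz constants
  choose K hK r hr hlip using fun k => lipschitz_local ((hFC2 k).of_le one_le_two) yn
  set Ks := (∑ k, K k) + 1 with hKs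
  have hKs0 : 0 < Ks := by
    have : (0:ℝ) ≤ ∑ k, K k := Finset.sum_nonneg fun k _ => (hK k).le
    linarith
  have hKle : ∀ k, K k ≤ Ks := by
    intro k
    have := Finset.single_le_sum (f := K) (fun j _ => (hK j).le) (Finset.mem_univ k)
    linarith
  set rm := Finset.univ.inf' Finset.univ_nonempty r with hrm
  have hrm0 : 0 < rm := (Finset.lt_inf'_iff _).mpr fun k _ => hr k
  have hrmle : ∀ k, rm ≤ r k := fun k => Finset.inf'_le r (Finset.mem_univ k)
  set δ2 := min T (rm / M) with hδ2
  have hδ20 : 0 < δ2 := lt_min hT (by positivity)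
  have hsub2 : Set.Icc (0:ℝ) δ2 ⊆ J := by
    rw [hδ2, hJ]; exact Set.Icc_subset_Icc_right (min_le_left _ _)
  -- step 2
  have step2 : ∀ k : Fin N, ∀ t, 0 ≤ t → t ≤ δ2 →
      |y (tn + t) k - yn k - t * F k yn| ≤ Ks * M * t ^ 2 := by
    intro k
    refine integrate_bound (T' := δ2) (φ := fun s => y (tn + s) k - yn k - s * F k yn)
      (w := fun s => F k (y (tn + s)) - F k yn) (by positivity) ?_ (by simp [hyn]) ?_
    · intro s hs
      have hs' : s ∈ J := hsub2 hs
      have h1 := ((hder k s hs').mono hsub2).sub_const (yn k)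
      exact h1.sub ((hasDerivAt_mul_const (F k yn)).hasDerivWithinAt)
    · intro s hs hsδ
      have hsT : s ≤ T := hsδ.trans (min_le_left _ _)
      have h1 : ‖y (tn + s) - yn‖ ≤ M * s := step1v s hs hsT
      have h2 : ‖y (tn + s) - yn‖ ≤ r k := by
        have : M * s ≤ rm := by
          have hsr : s ≤ rm / M := hsδ.trans (min_le_right _ _)
          calc M * s ≤ M * (rm / M) := by nlinarith
            _ = rm := by field_simp
        linarith [hrmle k]
      have h3 := hlip k (y (tn + s)) yn h2 (by simpa using (hr k).le)
      calc |F k (y (tn + s)) - F k yn| ≤ K k * ‖y (tn + s) - yn‖ := by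
            simpa [Real.norm_eq_abs] using h3
        _ ≤ Ks * M * s ^ 1 := by
            have hn : (0:ℝ) ≤ ‖y (tn + s) - yn‖ := norm_nonneg _
            have := hKle k
            have := (hK k).le
            nlinarith
  have step2v : ∀ t, 0 ≤ t → t ≤ δ2 →
      ‖y (tn + t) - yn - t • (fun k => F k yn)‖ ≤ Ks * M * t ^ 2 := by
    intro t ht htδ
    refine (pi_norm_le_iff_of_nonneg (by positivity)).mpr fun k => ?_
    have := step2 k t ht htδ
    simpa [Real.norm_eq_abs, smul_eq_mul] using this
  -- step 3
  set fv : Fin N → ℝ := fun k => F k yn with hfv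
  set q := fderiv ℝ (F i) yn fv with hq
  obtain ⟨Ct, hCt, r2, hr2, htay⟩ := taylor_comp_bound (hFC2 i) yn fv
  set δ3 := min δ2 (r2 / M) with hδ3
  have hδ30 : 0 < δ3 := lt_min hδ20 (by positivity)
  set C3 := Ct * (M ^ 2 + Ks * M) with hC3
  have hC30 : 0 < C3 := by positivity
  have hsub3 : Set.Icc (0:ℝ) δ3 ⊆ J := fun s hs => hsub2 ⟨hs.1, hs.2.trans (min_le_left _ _)⟩
  have step3 : ∀ t, 0 ≤ t → t ≤ δ3 →
      |y (tn + t) i - yn i - t * F i yn - t ^ 2 / 2 * q| ≤ C3 * t ^ 3 := by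
    refine integrate_bound (T' := δ3) (φ := fun s => y (tn + s) i - yn i - s * F i yn - s ^ 2 / 2 * q)
      (w := fun s => F i (y (tn + s)) - F i yn - s * q) hC30 ?_ (by simp [hyn]) ?_
    · intro s hs
      have hs' : s ∈ J := hsub3 hs
      have hsq : HasDerivAt (fun x : ℝ => x ^ 2 / 2 * q) (s * q) s := by
        have h := ((hasDerivAt_pow 2 s).div_const 2).mul_const q
        exact h.congr_deriv (by ring)
      have h1 := ((hder i s hs').mono hsub3).sub_const (yn i)
      exact (h1.sub ((hasDerivAt_mul_const (F i yn)).hasDerivWithinAt)).sub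
        hsq.hasDerivWithinAt
    · intro s hs hsδ
      have hsδ2 : s ≤ δ2 := hsδ.trans (min_le_left _ _)
      have hsT : s ≤ T := hsδ2.trans (min_le_left _ _)
      have h1 : ‖y (tn + s) - yn‖ ≤ M * s := step1v s hs hsT
      have h2 : ‖y (tn + s) - yn - s • fv‖ ≤ Ks * M * s ^ 2 := step2v s hs hsδ2
      have hrad : ‖y (tn + s) - yn‖ ≤ r2 := by
        have hsr : s ≤ r2 / M := hsδ.trans (min_le_right _ _)
        have : M * s ≤ r2 := by
          calc M * s ≤ M * (r2 / M) := by nlinarith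
            _ = r2 := by field_simp
        linarith
      have h3 := htay (y (tn + s)) s hrad
      have h4 : |F i (y (tn + s)) - F i yn - s * q| ≤
          Ct * (‖y (tn + s) - yn‖ ^ 2 + ‖y (tn + s) - yn - s • fv‖) := h3
      calc |F i (y (tn + s)) - F i yn - s * q|
          ≤ Ct * (‖y (tn + s) - yn‖ ^ 2 + ‖y (tn + s) - yn - s • fv‖) := h4
        _ ≤ Ct * ((M * s) ^ 2 + Ks * M * s ^ 2) := by
            have e1 : ‖y (tn + s) - yn‖ ^ 2 ≤ (M * s) ^ 2 := by
              nlinarith [norm_nonneg (y (tn + s) - yn)]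
            nlinarith [mul_le_mul_of_nonneg_left (add_le_add e1 h2) hCt.le]
        _ = C3 * s ^ 2 := by rw [hC3]; ring
  refine ⟨C3, hC30, δ3, hδ30, fun t ht htδ => ?_⟩
  have := step3 t ht.le htδ.le
  calc |y (tn + t) i - (yn i + t * F i yn + t ^ 2 / 2 * fderiv ℝ (F i) yn fun j => F j yn)|
      = |y (tn + t) i - yn i - t * F i yn - t ^ 2 / 2 * q| := by rw [hq, hfv]; ring_nf
    _ ≤ C3 * t ^ 3 := this

theorem abs_sub_le' (a b : ℝ) : |a - b| ≤ |a| + |b| := by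
  rw [sub_eq_add_neg]
  exact (abs_add_le a (-b)).trans (by rw [abs_neg])

theorem coefsplit {b1 b2 a21 : ℝ} (hbsum : b1 + b2 = 1) (hab : a21 * b2 = 1/2)
    (pn p2 g t : ℝ) :
    b1 * pn + b2 * p2 - pn - t/2 * g = b2 * (p2 - pn - t * (a21 * g)) := by
  linear_combination pn * hbsum + t * g * hab

theorem frac_bound {c x s cb W iv : ℝ} (hc : 0 ≤ c) (hcb : c ≤ cb) (hx : |x| ≤ W)
    (hs : 0 < s) (hiv : 1/s ≤ iv) : |c * x / s| ≤ cb * iv * W := by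
  have hWnn : 0 ≤ W := (abs_nonneg x).trans hx
  rw [abs_div, abs_mul, abs_of_nonneg hc, abs_of_pos hs, div_eq_mul_inv, ← one_div]
  have h1 : c * |x| ≤ cb * W := mul_le_mul hcb hx (abs_nonneg x) (hc.trans hcb)
  have h2 : (0:ℝ) < 1/s := by positivity
  calc c * |x| * (1/s) ≤ (cb * W) * iv :=
        mul_le_mul h1 hiv h2.le (mul_nonneg (hc.trans hcb) hWnn)
    _ = cb * iv * W := by ring

set_option maxHeartbeats 2000000 in
theorem stmt_18 (N : ℕ) (hN : 1 ≤ N)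
    (p d : Fin N → Fin N → (Fin N → ℝ) → ℝ)
    (hpnn : ∀ i j z, 0 ≤ p i j z) (hdnn : ∀ i j z, 0 ≤ d i j z)
    (hpC2 : ∀ i j, ContDiff ℝ 2 (p i j)) (hdC2 : ∀ i j, ContDiff ℝ 2 (d i j))
    (hcons : ∀ i j z, p i j z = d j i z)
    (hpdiag : ∀ i z, p i i z = 0) (hddiag : ∀ i z, d i i z = 0)
    (P D : Fin N → (Fin N → ℝ) → ℝ)
    (hP : ∀ i z, P i z = ∑ j, p i j z) (hD : ∀ i z, D i z = ∑ j, d i j z)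
    (tn T : ℝ) (hT : 0 < T)
    (y : ℝ → Fin N → ℝ)
    (hy : ∀ (i : Fin N), ∀ t ∈ Set.Icc tn (tn + T),
      HasDerivWithinAt (fun s => y s i) (P i (y t) - D i (y t)) (Set.Icc tn (tn + T)) t)
    (yn : Fin N → ℝ) (hyn : y tn = yn) (hynpos : ∀ i, 0 < yn i)
    (a21 b1 b2 : ℝ) (ha21 : 0 ≤ a21) (hb1 : 0 ≤ b1) (hb2 : 0 ≤ b2)
    (hbsum : b1 + b2 = 1) (hab : a21 * b2 = 1 / 2)
    (piw σ : ℝ → Fin N → ℝ)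
    (hpiwpos : ∀ Δt, 0 < Δt → Δt < T → ∀ i, 0 < piw Δt i)
    (hσpos : ∀ Δt, 0 < Δt → Δt < T → ∀ i, 0 < σ Δt i)
    (hpiwO : ∀ i, BigOAtZero (fun Δt => piw Δt i - yn i) 1)
    (hσO : ∀ i, BigOAtZero (fun Δt => σ Δt i - (yn i + Δt * (P i yn - D i yn))) 2)
    (Y2 Y : ℝ → Fin N → ℝ)
    (hY2 : ∀ Δt, 0 < Δt → Δt < T → ∀ i,
      Y2 Δt i = (yn i + a21 * Δt * P i yn) / (1 + a21 * Δt * D i yn / piw Δt i))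
    (hY : ∀ Δt, 0 < Δt → Δt < T → ∀ i,
      Y Δt i = yn i + Δt * ∑ j,
        ((b1 * p i j yn + b2 * p i j (Y2 Δt)) * Y Δt j / σ Δt j
          - (b1 * d i j yn + b2 * d i j (Y2 Δt)) * Y Δt i / σ Δt i)) :
    ∀ i, BigOAtZero (fun Δt => Y Δt i - y (tn + Δt) i) 3 := by
  classical
  set F : Fin N → (Fin N → ℝ) → ℝ := fun i z => ∑ j, (p i j z - d i j z) with hF
  have hFC2 : ∀ i, ContDiff ℝ 2 (F i) := fun i =>
    ContDiff.sum fun j _ => (hpC2 i j).sub (hdC2 i j)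
  have hFPD : ∀ i z, F i z = P i z - D i z := by
    intro i z; rw [hP, hD]; simp [hF, Finset.sum_sub_distrib]
  set fv : Fin N → ℝ := fun k => F k yn with hfv
  set q : Fin N → ℝ := fun i => fderiv ℝ (F i) yn fv with hq
  set gp : Fin N → Fin N → ℝ := fun i j => fderiv ℝ (p i j) yn fv with hgp
  set gd : Fin N → Fin N → ℝ := fun i j => fderiv ℝ (d i j) yn fv with hgd
  have hfvPD : ∀ i, fv i = P i yn - D i yn := fun i => by
    simp only [hfv]; exact hFPD i yn
  have hfveq : ∀ i, fv i = ∑ j, (p i j yn - d i j yn) := fun i => by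
    simp only [hfv, hF]
  -- exact solution side
  have hy' : ∀ i, ∀ t ∈ Set.Icc tn (tn + T),
      HasDerivWithinAt (fun s => y s i) (F i (y t)) (Set.Icc tn (tn + T)) t := by
    intro i t ht; rw [hFPD]; exact hy i t ht
  have hex : ∀ i, BigOAtZero (fun t => y (tn + t) i -
      (yn i + t * F i yn + t ^ 2 / 2 * (fderiv ℝ (F i) yn fun j => F j yn))) 3 :=
    fun i => exact_side F hFC2 tn T hT y hy' yn hyn i
  -- q as a sum
  have hqsum : ∀ i, q i = ∑ j, (gp i j - gd i j) := by
    intro i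
    have hdp : ∀ j ∈ Finset.univ, DifferentiableAt ℝ (fun z => p i j z - d i j z) yn :=
      fun j _ => (((hpC2 i j).differentiable (by norm_num)).differentiableAt).sub
        (((hdC2 i j).differentiable (by norm_num)).differentiableAt)
    have h1 : fderiv ℝ (F i) yn = ∑ j, fderiv ℝ (fun z => p i j z - d i j z) yn := by
      simp only [hF]
      exact fderiv_fun_sum hdp
    simp only [hq]
    rw [h1, ContinuousLinearMap.sum_apply]
    apply Finset.sum_congr rfl
    intro j _
    rw [fderiv_fun_sub (((hpC2 i j).differentiable (by norm_num)).differentiableAt)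
      (((hdC2 i j).differentiable (by norm_num)).differentiableAt)]
    simp [hgp, hgd]
  -- nonnegativity
  have hPn : ∀ i, 0 ≤ P i yn := fun i => by
    rw [hP]; exact Finset.sum_nonneg fun j _ => hpnn i j yn
  have hDn : ∀ i, 0 ≤ D i yn := fun i => by
    rw [hD]; exact Finset.sum_nonneg fun j _ => hdnn i j yn
  -- σ expansions
  have hσexp : ∀ i, BigOAtZero (fun t => σ t i - yn i - t * fv i) 2 := fun i =>
    BigOAtZero.congr one_pos (fun t _ _ => by rw [hfvPD i]; ring) (hσO i)
  have hσlin : ∀ i, BigOAtZero (fun t => σ t i - yn i) 1 := fun i =>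
    BigOAtZero.congr one_pos (fun t _ _ => by ring)
      (((hσexp i).mono (by norm_num)).add
        (BigOAtZero.const_mul (fv i) (BigOAtZero.pow 1)))
  -- lower bounds
  have hσlow : ∃ δ > 0, ∀ t, 0 < t → t < δ → ∀ i, yn i / 2 ≤ σ t i := by
    apply eventually_all_fin N
    intro i
    obtain ⟨δ, hδ0, hb⟩ := (hσlin i).small (half_pos (hynpos i))
    exact ⟨δ, hδ0, fun t ht htδ => by
      have := hb t ht htδ; rw [abs_le] at this; linarith⟩
  have hπlow : ∃ δ > 0, ∀ t, 0 < t → t < δ → ∀ i, yn i / 2 ≤ piw t i := by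
    apply eventually_all_fin N
    intro i
    obtain ⟨δ, hδ0, hb⟩ := (hpiwO i).small (half_pos (hynpos i))
    exact ⟨δ, hδ0, fun t ht htδ => by
      have := hb t ht htδ; rw [abs_le] at this; linarith⟩
  obtain ⟨δσ, hδσ0, hσl⟩ := hσlow
  obtain ⟨δπ0, hδπ00, hπl⟩ := hπlow
  have hσinv : ∀ jj, BigOAtZero (fun t => 1 / σ t jj) 0 := by
    intro jj
    refine ⟨2 / yn jj + 1, add_pos (div_pos two_pos (hynpos jj)) one_pos, δσ, hδσ0,
      fun t ht htδ => ?_⟩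
    have h := hσl t ht htδ jj
    have hpos : 0 < σ t jj := lt_of_lt_of_le (half_pos (hynpos jj)) h
    beta_reduce
    rw [abs_of_pos (one_div_pos.mpr hpos), pow_zero, mul_one]
    have h2 : 1 / σ t jj ≤ 2 / yn jj := by
      rw [div_le_div_iff₀ hpos (hynpos jj)]; nlinarith [hynpos jj]
    linarith [hynpos jj]
  -- Y2 expansion
  have hY2exp : ∀ i, BigOAtZero (fun t => Y2 t i - yn i - a21 * t * fv i) 2 := by
    intro i
    obtain ⟨Cπ, hCπ0, δπ, hδπ1, hπb⟩ := hpiwO i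
    set X := a21 * D i yn * Cπ + a21 ^ 2 * D i yn * |fv i| with hX
    have hXnn : 0 ≤ X := by
      have h1 : 0 ≤ a21 * D i yn * Cπ := mul_nonneg (mul_nonneg ha21 (hDn i)) hCπ0.le
      have h2 : 0 ≤ a21 ^ 2 * D i yn * |fv i| :=
        mul_nonneg (mul_nonneg (sq_nonneg a21) (hDn i)) (abs_nonneg _)
      rw [hX]; linarith
    have h2yn : (0:ℝ) < 2 / yn i := div_pos two_pos (hynpos i)
    refine ⟨X * (2 / yn i) + 1, by nlinarith, min (min δπ δπ0) T,
      lt_min (lt_min hδπ1 hδπ00) hT, fun t ht htδ => ?_⟩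
    have htπ : t < δπ := htδ.trans_le ((min_le_left _ _).trans (min_le_left _ _))
    have htL : t < δπ0 := htδ.trans_le ((min_le_left _ _).trans (min_le_right _ _))
    have htT : t < T := htδ.trans_le (min_le_right _ _)
    have hπpos := hpiwpos t ht htT i
    have hπge : yn i / 2 ≤ piw t i := hπl t ht htL i
    have hπb' : |piw t i - yn i| ≤ Cπ * t := by
      simpa using hπb t ht htπ
    have hπne : piw t i ≠ 0 := ne_of_gt hπpos
    have hdnn0 : 0 ≤ a21 * t * D i yn / piw t i :=
      div_nonneg (mul_nonneg (mul_nonneg ha21 ht.le) (hDn i)) hπpos.le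
    have hden : (1:ℝ) ≤ 1 + a21 * t * D i yn / piw t i := by linarith
    have hkey : Y2 t i - yn i - a21 * t * fv i =
        (a21 * t * D i yn * (piw t i - yn i) - a21 ^ 2 * t ^ 2 * D i yn * fv i) /
          (piw t i * (1 + a21 * t * D i yn / piw t i)) := by
      have hA : a21 * t * D i yn + piw t i ≠ 0 := by
        have h0 : 0 ≤ a21 * t * D i yn := mul_nonneg (mul_nonneg ha21 ht.le) (hDn i)
        exact ne_of_gt (by linarith)
      rw [hY2 t ht htT i, hfvPD i]
      have e0 : 1 + a21 * t * D i yn / piw t i =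
          (a21 * t * D i yn + piw t i) / piw t i := by
        rw [add_div, div_self hπne]
        ring
      rw [e0, div_div_eq_mul_div]
      have e1 : piw t i * ((a21 * t * D i yn + piw t i) / piw t i) =
          a21 * t * D i yn + piw t i := by
        rw [mul_comm, div_mul_cancel₀ _ hπne]
      rw [e1, eq_div_iff hA, sub_mul, sub_mul, div_mul_cancel₀ _ hA]
      ring
    beta_reduce
    rw [hkey, abs_div]
    have hd2 : yn i / 2 ≤ |piw t i * (1 + a21 * t * D i yn / piw t i)| := by
      rw [abs_of_pos (mul_pos hπpos (by linarith))]
      nlinarith [hynpos i]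
    have hnum : |a21 * t * D i yn * (piw t i - yn i) - a21 ^ 2 * t ^ 2 * D i yn * fv i| ≤
        X * t ^ 2 := by
      have e1 : |a21 * t * D i yn * (piw t i - yn i)| ≤ a21 * D i yn * Cπ * t ^ 2 := by
        rw [abs_mul, abs_of_nonneg (mul_nonneg (mul_nonneg ha21 ht.le) (hDn i))]
        calc a21 * t * D i yn * |piw t i - yn i| ≤ a21 * t * D i yn * (Cπ * t) :=
              mul_le_mul_of_nonneg_left hπb'
                (mul_nonneg (mul_nonneg ha21 ht.le) (hDn i))
          _ = a21 * D i yn * Cπ * t ^ 2 := by ring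
      have e2 : |a21 ^ 2 * t ^ 2 * D i yn * fv i| = a21 ^ 2 * D i yn * |fv i| * t ^ 2 := by
        rw [abs_mul, abs_of_nonneg (mul_nonneg (mul_nonneg (sq_nonneg a21) (sq_nonneg t)) (hDn i))]
        ring
      have e3 := abs_sub_le' (a21 * t * D i yn * (piw t i - yn i))
        (a21 ^ 2 * t ^ 2 * D i yn * fv i)
      rw [hX]; linarith
    have hdpos : (0:ℝ) < |piw t i * (1 + a21 * t * D i yn / piw t i)| :=
      lt_of_lt_of_le (half_pos (hynpos i)) hd2
    rw [div_le_iff₀ hdpos]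
    have ht2 : (0:ℝ) < t ^ 2 := by positivity
    have hpos1 : (0:ℝ) ≤ (X * (2 / yn i) + 1) * t ^ 2 := by
      have : (0:ℝ) ≤ X * (2 / yn i) := mul_nonneg hXnn h2yn.le
      nlinarith
    have step1 : (X * (2 / yn i) + 1) * t ^ 2 * (yn i / 2) ≤
        (X * (2 / yn i) + 1) * t ^ 2 * |piw t i * (1 + a21 * t * D i yn / piw t i)| :=
      mul_le_mul_of_nonneg_left hd2 hpos1
    have step2 : (X * (2 / yn i) + 1) * t ^ 2 * (yn i / 2) =
        X * t ^ 2 * ((2 / yn i) * (yn i / 2)) + t ^ 2 * (yn i / 2) := by ring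
    have hinv2 : (2 / yn i) * (yn i / 2) = 1 := by
      have hyne : yn i ≠ 0 := ne_of_gt (hynpos i)
      field_simp
    rw [hinv2, mul_one] at step2
    have ht3 : 0 < t ^ 2 * (yn i / 2) := mul_pos ht2 (half_pos (hynpos i))
    calc |a21 * t * D i yn * (piw t i - yn i) - a21 ^ 2 * t ^ 2 * D i yn * fv i|
        ≤ X * t ^ 2 := hnum
      _ ≤ X * t ^ 2 + t ^ 2 * (yn i / 2) := le_add_of_nonneg_right ht3.le
      _ = (X * (2 / yn i) + 1) * t ^ 2 * (yn i / 2) := step2.symm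
      _ ≤ (X * (2 / yn i) + 1) * t ^ 2 *
          |piw t i * (1 + a21 * t * D i yn / piw t i)| := step1
  have hY2lin : ∀ i, BigOAtZero (fun t => Y2 t i - yn i) 1 := fun i =>
    BigOAtZero.congr one_pos (fun t _ _ => by ring)
      (((hY2exp i).mono (by norm_num)).add
        (BigOAtZero.const_mul (a21 * fv i) (BigOAtZero.pow 1)))
  -- vector bounds for Y2
  have hvec1 : ∃ C > 0, ∃ δ > 0, ∀ t : ℝ, 0 < t → t < δ → ‖Y2 t - yn‖ ≤ C * t ^ 1 :=
    vec_bound (fun t => Y2 t - yn) 1 (fun i => hY2lin i)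
  have hvec2 : ∃ C > 0, ∃ δ > 0, ∀ t : ℝ, 0 < t → t < δ →
      ‖Y2 t - yn - t • (a21 • fv)‖ ≤ C * t ^ 2 :=
    vec_bound (fun t => Y2 t - yn - t • (a21 • fv)) 2 (fun i =>
      BigOAtZero.congr one_pos (fun t _ _ => by
        simp only [Pi.sub_apply, Pi.smul_apply, smul_eq_mul]; ring) (hY2exp i))
  -- coefficient expansions (for a general C² function g)
  have hcoef : ∀ (g : Fin N → Fin N → (Fin N → ℝ) → ℝ), (∀ i j, ContDiff ℝ 2 (g i j)) →
      ∀ i j, BigOAtZero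
        (fun t => g i j (Y2 t) - g i j yn - t * (a21 * fderiv ℝ (g i j) yn fv)) 2 := by
    intro g hg i j
    obtain ⟨Ct, hCt, r2, hr2, htay⟩ := taylor_comp_bound (hg i j) yn (a21 • fv)
    obtain ⟨C1, hC10, δ1, hδ10, h1⟩ := hvec1
    obtain ⟨C2, hC20, δ2, hδ20, h2⟩ := hvec2
    refine ⟨Ct * (C1 ^ 2 + C2) + 1, by positivity, min (min δ1 δ2) (r2 / C1),
      lt_min (lt_min hδ10 hδ20) (by positivity), fun t ht htδ => ?_⟩
    have ht1 : t < δ1 := htδ.trans_le ((min_le_left _ _).trans (min_le_left _ _))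
    have ht2 : t < δ2 := htδ.trans_le ((min_le_left _ _).trans (min_le_right _ _))
    have ht3 : t < r2 / C1 := htδ.trans_le (min_le_right _ _)
    have h1t := h1 t ht ht1
    have h2t := h2 t ht ht2
    rw [pow_one] at h1t
    have hrad : ‖Y2 t - yn‖ ≤ r2 := by
      have : C1 * t ≤ r2 := by
        rw [lt_div_iff₀ hC10] at ht3; nlinarith
      linarith
    have htt := htay (Y2 t) t hrad
    have hfd : fderiv ℝ (g i j) yn (a21 • fv) = a21 * fderiv ℝ (g i j) yn fv := by
      rw [map_smul]; simp [smul_eq_mul]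
    rw [hfd] at htt
    calc |g i j (Y2 t) - g i j yn - t * (a21 * fderiv ℝ (g i j) yn fv)|
        ≤ Ct * (‖Y2 t - yn‖ ^ 2 + ‖Y2 t - yn - t • (a21 • fv)‖) := htt
      _ ≤ Ct * ((C1 * t) ^ 2 + C2 * t ^ 2) := by
          have e1 : ‖Y2 t - yn‖ ^ 2 ≤ (C1 * t) ^ 2 := by
            nlinarith [norm_nonneg (Y2 t - yn)]
          nlinarith [h2t, norm_nonneg (Y2 t - yn - t • (a21 • fv))]
      _ = Ct * (C1 ^ 2 + C2) * t ^ 2 := by ring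
      _ ≤ (Ct * (C1 ^ 2 + C2) + 1) * t ^ 2 := by nlinarith
  have hcoefp := hcoef p hpC2
  have hcoefd := hcoef d hdC2
  have hplin : ∀ i j, BigOAtZero (fun t => p i j (Y2 t) - p i j yn) 1 := fun i j =>
    BigOAtZero.congr one_pos (fun t _ _ => by ring)
      (((hcoefp i j).mono (by norm_num)).add
        (BigOAtZero.const_mul (a21 * gp i j) (BigOAtZero.pow 1)))
  have hdlin : ∀ i j, BigOAtZero (fun t => d i j (Y2 t) - d i j yn) 1 := fun i j =>
    BigOAtZero.congr one_pos (fun t _ _ => by ring)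
      (((hcoefd i j).mono (by norm_num)).add
        (BigOAtZero.const_mul (a21 * gd i j) (BigOAtZero.pow 1)))
  have hcoef0p : ∀ i j, BigOAtZero (fun t => b1 * p i j yn + b2 * p i j (Y2 t)) 0 :=
    fun i j =>
    BigOAtZero.congr one_pos (fun t _ _ => by
        have hb : b1 = 1 - b2 := by linarith
        rw [hb]; ring)
      ((BigOAtZero.const (p i j yn)).add
        ((BigOAtZero.const_mul b2 (hplin i j)).mono (by norm_num)))
  have hcoef0d : ∀ i j, BigOAtZero (fun t => b1 * d i j yn + b2 * d i j (Y2 t)) 0 :=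
    fun i j =>
    BigOAtZero.congr one_pos (fun t _ _ => by
        have hb : b1 = 1 - b2 := by linarith
        rw [hb]; ring)
      ((BigOAtZero.const (d i j yn)).add
        ((BigOAtZero.const_mul b2 (hdlin i j)).mono (by norm_num)))
  -- bound constant Kc
  set Kc := ∑ i', ∑ j, ((p i' j yn + 1) * (2 / yn j) + (d i' j yn + 1) * (2 / yn i'))
    with hKc
  have hinner_nn : ∀ i', 0 ≤ ∑ j, ((p i' j yn + 1) * (2 / yn j) + (d i' j yn + 1) * (2 / yn i')) := by
    intro i'
    apply Finset.sum_nonneg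
    intro j _
    have a1 : 0 ≤ (p i' j yn + 1) * (2 / yn j) :=
      mul_nonneg (by linarith [hpnn i' j yn]) (div_nonneg (by norm_num) (hynpos j).le)
    have a2 : 0 ≤ (d i' j yn + 1) * (2 / yn i') :=
      mul_nonneg (by linarith [hdnn i' j yn]) (div_nonneg (by norm_num) (hynpos i').le)
    linarith
  have hKcnn : 0 ≤ Kc := by
    rw [hKc]; exact Finset.sum_nonneg fun i' _ => hinner_nn i'
  -- eventual closeness of coefficients
  have hpbound : ∃ δ > 0, ∀ t, 0 < t → t < δ → ∀ i' : Fin N, ∀ j : Fin N,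
      |p i' j (Y2 t) - p i' j yn| ≤ 1 := by
    apply eventually_all_fin N
    intro i'
    apply eventually_all_fin N
    intro j
    exact (hplin i' j).small one_pos
  have hdbound : ∃ δ > 0, ∀ t, 0 < t → t < δ → ∀ i' : Fin N, ∀ j : Fin N,
      |d i' j (Y2 t) - d i' j yn| ≤ 1 := by
    apply eventually_all_fin N
    intro i'
    apply eventually_all_fin N
    intro j
    exact (hdlin i' j).small one_pos
  -- uniform bound on the sums in the Y equation
  have hSb : ∃ δ > 0, ∀ t, 0 < t → t < δ → ∀ ii : Fin N,
      |∑ j, ((b1 * p ii j yn + b2 * p ii j (Y2 t)) * Y t j / σ t j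
        - (b1 * d ii j yn + b2 * d ii j (Y2 t)) * Y t ii / σ t ii)| ≤ Kc * ‖Y t‖ := by
    obtain ⟨δp, hδp0, hpb⟩ := hpbound
    obtain ⟨δd, hδd0, hdb⟩ := hdbound
    refine ⟨min δσ (min δp δd), lt_min hδσ0 (lt_min hδp0 hδd0), fun t ht htδ ii => ?_⟩
    have htσ : t < δσ := htδ.trans_le (min_le_left _ _)
    have htp : t < δp := htδ.trans_le ((min_le_right _ _).trans (min_le_left _ _))
    have htd : t < δd := htδ.trans_le ((min_le_right _ _).trans (min_le_right _ _))
    have hb2le1 : b2 ≤ 1 := by linarith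
    have hWnn : (0:ℝ) ≤ ‖Y t‖ := norm_nonneg _
    have hterm : ∀ j : Fin N,
        |(b1 * p ii j yn + b2 * p ii j (Y2 t)) * Y t j / σ t j
          - (b1 * d ii j yn + b2 * d ii j (Y2 t)) * Y t ii / σ t ii| ≤
        ((p ii j yn + 1) * (2 / yn j) + (d ii j yn + 1) * (2 / yn ii)) * ‖Y t‖ := by
      intro j
      have hc0 : 0 ≤ b1 * p ii j yn + b2 * p ii j (Y2 t) :=
        add_nonneg (mul_nonneg hb1 (hpnn _ _ _)) (mul_nonneg hb2 (hpnn _ _ _))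
      have hc1 : b1 * p ii j yn + b2 * p ii j (Y2 t) ≤ p ii j yn + 1 := by
        have h := hpb t ht htp ii j
        rw [abs_le] at h
        have h2 := mul_le_mul_of_nonneg_left (by linarith [h.2] :
          p ii j (Y2 t) ≤ p ii j yn + 1) hb2
        have heq : b1 * p ii j yn + b2 * p ii j yn = p ii j yn := by
          rw [← add_mul, hbsum, one_mul]
        linarith
      have he0 : 0 ≤ b1 * d ii j yn + b2 * d ii j (Y2 t) :=
        add_nonneg (mul_nonneg hb1 (hdnn _ _ _)) (mul_nonneg hb2 (hdnn _ _ _))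
      have he1 : b1 * d ii j yn + b2 * d ii j (Y2 t) ≤ d ii j yn + 1 := by
        have h := hdb t ht htd ii j
        rw [abs_le] at h
        have h2 := mul_le_mul_of_nonneg_left (by linarith [h.2] :
          d ii j (Y2 t) ≤ d ii j yn + 1) hb2
        have heq : b1 * d ii j yn + b2 * d ii j yn = d ii j yn := by
          rw [← add_mul, hbsum, one_mul]
        linarith
      have hσj : yn j / 2 ≤ σ t j := hσl t ht htσ j
      have hσjpos : 0 < σ t j := lt_of_lt_of_le (half_pos (hynpos j)) hσj
      have hinvj : 1 / σ t j ≤ 2 / yn j := by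
        rw [div_le_div_iff₀ hσjpos (hynpos j)]; nlinarith [hynpos j]
      have hσi : yn ii / 2 ≤ σ t ii := hσl t ht htσ ii
      have hσipos : 0 < σ t ii := lt_of_lt_of_le (half_pos (hynpos ii)) hσi
      have hinvi : 1 / σ t ii ≤ 2 / yn ii := by
        rw [div_le_div_iff₀ hσipos (hynpos ii)]; nlinarith [hynpos ii]
      have hYj : |Y t j| ≤ ‖Y t‖ := by
        rw [← Real.norm_eq_abs]; exact norm_le_pi_norm (Y t) j
      have hYi : |Y t ii| ≤ ‖Y t‖ := by
        rw [← Real.norm_eq_abs]; exact norm_le_pi_norm (Y t) ii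
      have t1 := frac_bound hc0 hc1 hYj hσjpos hinvj
      have t2 := frac_bound he0 he1 hYi hσipos hinvi
      have t3 := abs_sub_le'
        ((b1 * p ii j yn + b2 * p ii j (Y2 t)) * Y t j / σ t j)
        ((b1 * d ii j yn + b2 * d ii j (Y2 t)) * Y t ii / σ t ii)
      calc |(b1 * p ii j yn + b2 * p ii j (Y2 t)) * Y t j / σ t j
          - (b1 * d ii j yn + b2 * d ii j (Y2 t)) * Y t ii / σ t ii|
          ≤ (p ii j yn + 1) * (2 / yn j) * ‖Y t‖ + (d ii j yn + 1) * (2 / yn ii) * ‖Y t‖ := by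
            linarith
        _ = ((p ii j yn + 1) * (2 / yn j) + (d ii j yn + 1) * (2 / yn ii)) * ‖Y t‖ := by ring
    calc |∑ j, ((b1 * p ii j yn + b2 * p ii j (Y2 t)) * Y t j / σ t j
          - (b1 * d ii j yn + b2 * d ii j (Y2 t)) * Y t ii / σ t ii)|
        ≤ ∑ j, |(b1 * p ii j yn + b2 * p ii j (Y2 t)) * Y t j / σ t j
          - (b1 * d ii j yn + b2 * d ii j (Y2 t)) * Y t ii / σ t ii| :=
          Finset.abs_sum_le_sum_abs _ _
      _ ≤ ∑ j, ((p ii j yn + 1) * (2 / yn j) + (d ii j yn + 1) * (2 / yn ii)) * ‖Y t‖ :=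
          Finset.sum_le_sum fun j _ => hterm j
      _ = (∑ j, ((p ii j yn + 1) * (2 / yn j) + (d ii j yn + 1) * (2 / yn ii))) * ‖Y t‖ := by
          rw [Finset.sum_mul]
      _ ≤ Kc * ‖Y t‖ := by
          apply mul_le_mul_of_nonneg_right _ hWnn
          rw [hKc]
          exact Finset.single_le_sum (f := fun i' =>
            ∑ j, ((p i' j yn + 1) * (2 / yn j) + (d i' j yn + 1) * (2 / yn i')))
            (fun i' _ => hinner_nn i') (Finset.mem_univ ii)
  -- boundedness of Y
  have hYW : ∃ δ > 0, ∀ t, 0 < t → t < δ → ‖Y t‖ ≤ 2 * ‖yn‖ := by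
    obtain ⟨δS, hδS0, hS⟩ := hSb
    refine ⟨min (min δS T) (1 / (2 * (Kc + 1))), lt_min (lt_min hδS0 hT) (by positivity),
      fun t ht htδ => ?_⟩
    have htS : t < δS := htδ.trans_le ((min_le_left _ _).trans (min_le_left _ _))
    have htT : t < T := htδ.trans_le ((min_le_left _ _).trans (min_le_right _ _))
    have htK : t ≤ 1 / (2 * (Kc + 1)) := (htδ.trans_le (min_le_right _ _)).le
    have hWabs : ∀ ii, |Y t ii| ≤ ‖yn‖ + t * (Kc * ‖Y t‖) := by
      intro ii
      rw [hY t ht htT ii]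
      have h1 := hS t ht htS ii
      have h2 : |yn ii| ≤ ‖yn‖ := by
        rw [← Real.norm_eq_abs]; exact norm_le_pi_norm yn ii
      have h3 := abs_add_le (yn ii) (t * ∑ j,
        ((b1 * p ii j yn + b2 * p ii j (Y2 t)) * Y t j / σ t j
          - (b1 * d ii j yn + b2 * d ii j (Y2 t)) * Y t ii / σ t ii))
      have h4 : |t * ∑ j, ((b1 * p ii j yn + b2 * p ii j (Y2 t)) * Y t j / σ t j
          - (b1 * d ii j yn + b2 * d ii j (Y2 t)) * Y t ii / σ t ii)| ≤
          t * (Kc * ‖Y t‖) := by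
        rw [abs_mul, abs_of_pos ht]
        exact mul_le_mul_of_nonneg_left h1 ht.le
      linarith
    have hWW : ‖Y t‖ ≤ ‖yn‖ + t * (Kc * ‖Y t‖) := by
      refine (pi_norm_le_iff_of_nonneg ?_).mpr fun ii => by
        rw [Real.norm_eq_abs]; exact hWabs ii
      exact add_nonneg (norm_nonneg _)
        (mul_nonneg ht.le (mul_nonneg hKcnn (norm_nonneg _)))
    have htK2 : t * Kc ≤ 1 / 2 := by
      have h1 : t * Kc ≤ (1 / (2 * (Kc + 1))) * Kc :=
        mul_le_mul_of_nonneg_right htK hKcnn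
      have h2 : (1 / (2 * (Kc + 1))) * Kc ≤ 1 / 2 := by
        rw [div_mul_eq_mul_div, one_mul, div_le_div_iff₀ (by positivity) (by norm_num)]
        nlinarith
      linarith
    nlinarith [hWW, htK2, norm_nonneg (Y t),
      mul_nonneg (by linarith : (0:ℝ) ≤ 1/2 - t * Kc) (norm_nonneg (Y t))]
  -- Y linear bound
  have hYlin : ∀ ii, BigOAtZero (fun t => Y t ii - yn ii) 1 := by
    intro ii
    obtain ⟨δS, hδS0, hS⟩ := hSb
    obtain ⟨δW, hδW0, hWle⟩ := hYW
    have hpos : (0:ℝ) < Kc * (2 * ‖yn‖) + 1 := by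
      have : (0:ℝ) ≤ Kc * (2 * ‖yn‖) := mul_nonneg hKcnn (by positivity)
      linarith
    refine ⟨Kc * (2 * ‖yn‖) + 1, hpos, min (min δS δW) T,
      lt_min (lt_min hδS0 hδW0) hT, fun t ht htδ => ?_⟩
    have htS : t < δS := htδ.trans_le ((min_le_left _ _).trans (min_le_left _ _))
    have htW : t < δW := htδ.trans_le ((min_le_left _ _).trans (min_le_right _ _))
    have htT : t < T := htδ.trans_le (min_le_right _ _)
    beta_reduce
    rw [hY t ht htT ii]
    have h1 := hS t ht htS ii
    have h2 := hWle t ht htW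
    have h3 : Kc * ‖Y t‖ ≤ Kc * (2 * ‖yn‖) := mul_le_mul_of_nonneg_left h2 hKcnn
    calc |yn ii + t * ∑ j, ((b1 * p ii j yn + b2 * p ii j (Y2 t)) * Y t j / σ t j
          - (b1 * d ii j yn + b2 * d ii j (Y2 t)) * Y t ii / σ t ii) - yn ii|
        = t * |∑ j, ((b1 * p ii j yn + b2 * p ii j (Y2 t)) * Y t j / σ t j
          - (b1 * d ii j yn + b2 * d ii j (Y2 t)) * Y t ii / σ t ii)| := by
          rw [add_sub_cancel_left, abs_mul, abs_of_pos ht]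
      _ ≤ t * (Kc * (2 * ‖yn‖)) := by
          apply mul_le_mul_of_nonneg_left _ ht.le
          linarith
      _ ≤ (Kc * (2 * ‖yn‖) + 1) * t ^ 1 := by nlinarith
  -- Y/σ bounded
  have hYdσ : ∀ jj, BigOAtZero (fun t => Y t jj / σ t jj) 0 := by
    intro jj
    obtain ⟨δW, hδW0, hWle⟩ := hYW
    have hpos : (0:ℝ) < 2 * ‖yn‖ * (2 / yn jj) + 1 := by
      have : (0:ℝ) ≤ 2 * ‖yn‖ * (2 / yn jj) :=
        mul_nonneg (by positivity) (div_nonneg (by norm_num) (hynpos jj).le)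
      linarith
    refine ⟨2 * ‖yn‖ * (2 / yn jj) + 1, hpos, min δW δσ, lt_min hδW0 hδσ0,
      fun t ht htδ => ?_⟩
    have htW : t < δW := htδ.trans_le (min_le_left _ _)
    have htσ : t < δσ := htδ.trans_le (min_le_right _ _)
    have hσj : yn jj / 2 ≤ σ t jj := hσl t ht htσ jj
    have hσjpos : 0 < σ t jj := lt_of_lt_of_le (half_pos (hynpos jj)) hσj
    have hinvj : 1 / σ t jj ≤ 2 / yn jj := by
      rw [div_le_div_iff₀ hσjpos (hynpos jj)]; nlinarith [hynpos jj]
    have hYj : |Y t jj| ≤ 2 * ‖yn‖ := by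
      have := hWle t ht htW
      have h2 : |Y t jj| ≤ ‖Y t‖ := by
        rw [← Real.norm_eq_abs]; exact norm_le_pi_norm (Y t) jj
      linarith
    beta_reduce
    rw [pow_zero, mul_one, abs_div, abs_of_pos hσjpos, div_eq_mul_inv, ← one_div]
    have h1 : |Y t jj| * (1 / σ t jj) ≤ (2 * ‖yn‖) * (2 / yn jj) :=
      mul_le_mul hYj hinvj (by positivity) (by positivity)
    linarith
  -- ratio minus 1, first order
  have hratio1 : ∀ jj, BigOAtZero (fun t => Y t jj / σ t jj - 1) 1 := by
    intro jj
    have hnum : BigOAtZero (fun t => Y t jj - σ t jj) 1 :=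
      BigOAtZero.congr one_pos (fun t _ _ => by ring) ((hYlin jj).sub (hσlin jj))
    have hmul := hnum.mul (hσinv jj)
    refine BigOAtZero.congr hδσ0 (fun t ht htδ => ?_) hmul
    have hσj : yn jj / 2 ≤ σ t jj := hσl t ht htδ jj
    have hσjpos : 0 < σ t jj := lt_of_lt_of_le (half_pos (hynpos jj)) hσj
    have hne : σ t jj ≠ 0 := ne_of_gt hσjpos
    beta_reduce
    field_simp
  -- Y expansion to first order
  have hYexp : ∀ ii, BigOAtZero (fun t => Y t ii - yn ii - t * fv ii) 2 := by
    intro ii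
    have hper : ∀ j : Fin N, BigOAtZero (fun t =>
        ((b1 * p ii j yn + b2 * p ii j (Y2 t)) * Y t j / σ t j
          - (b1 * d ii j yn + b2 * d ii j (Y2 t)) * Y t ii / σ t ii)
          - (p ii j yn - d ii j yn)) 1 := by
      intro j
      have hc1 : BigOAtZero (fun t =>
          (b1 * p ii j yn + b2 * p ii j (Y2 t)) - p ii j yn) 1 :=
        BigOAtZero.congr one_pos (fun t _ _ => by
            have hb : b1 = 1 - b2 := by linarith
            rw [hb]; ring)
          (BigOAtZero.const_mul b2 (hplin ii j))
      have he1 : BigOAtZero (fun t =>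
          (b1 * d ii j yn + b2 * d ii j (Y2 t)) - d ii j yn) 1 :=
        BigOAtZero.congr one_pos (fun t _ _ => by
            have hb : b1 = 1 - b2 := by linarith
            rw [hb]; ring)
          (BigOAtZero.const_mul b2 (hdlin ii j))
      have hpterm : BigOAtZero (fun t =>
          (b1 * p ii j yn + b2 * p ii j (Y2 t)) * Y t j / σ t j - p ii j yn) 1 :=
        BigOAtZero.congr one_pos (fun t _ _ => by ring)
          ((hc1.mul (hYdσ j)).add (BigOAtZero.const_mul (p ii j yn) (hratio1 j)))
      have hdterm : BigOAtZero (fun t =>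
          (b1 * d ii j yn + b2 * d ii j (Y2 t)) * Y t ii / σ t ii - d ii j yn) 1 :=
        BigOAtZero.congr one_pos (fun t _ _ => by ring)
          ((he1.mul (hYdσ ii)).add (BigOAtZero.const_mul (d ii j yn) (hratio1 ii)))
      exact BigOAtZero.congr one_pos (fun t _ _ => by ring) (hpterm.sub hdterm)
    have hsum := BigOAtZero.sum (s := Finset.univ) (fun j (_ : j ∈ Finset.univ) => hper j)
    have hG : BigOAtZero (fun t =>
        (∑ j, ((b1 * p ii j yn + b2 * p ii j (Y2 t)) * Y t j / σ t j
          - (b1 * d ii j yn + b2 * d ii j (Y2 t)) * Y t ii / σ t ii)) - fv ii) 1 := by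
      refine BigOAtZero.congr one_pos (fun t _ _ => ?_) hsum
      beta_reduce
      rw [hfveq ii, ← Finset.sum_sub_distrib]
    have hfin := (BigOAtZero.pow 1).mul hG
    refine BigOAtZero.congr hT (fun t ht htδ => ?_) hfin
    beta_reduce
    linear_combination hY t ht htδ ii
  -- Y - σ second order, ratio - 1 second order
  have hYσ2 : ∀ jj, BigOAtZero (fun t => Y t jj - σ t jj) 2 := fun jj =>
    BigOAtZero.congr one_pos (fun t _ _ => by ring) ((hYexp jj).sub (hσexp jj))
  have hratio2 : ∀ jj, BigOAtZero (fun t => Y t jj / σ t jj - 1) 2 := by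
    intro jj
    have hmul := (hYσ2 jj).mul (hσinv jj)
    refine BigOAtZero.congr hδσ0 (fun t ht htδ => ?_) hmul
    have hσj : yn jj / 2 ≤ σ t jj := hσl t ht htδ jj
    have hσjpos : 0 < σ t jj := lt_of_lt_of_le (half_pos (hynpos jj)) hσj
    have hne : σ t jj ≠ 0 := ne_of_gt hσjpos
    beta_reduce
    field_simp
  -- final assembly
  intro i
  have hper2 : ∀ j : Fin N, BigOAtZero (fun t =>
      ((b1 * p i j yn + b2 * p i j (Y2 t)) * Y t j / σ t j
        - (b1 * d i j yn + b2 * d i j (Y2 t)) * Y t i / σ t i)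
        - (p i j yn - d i j yn) - t / 2 * (gp i j - gd i j)) 2 := by
    intro j
    have hp2 : BigOAtZero (fun t =>
        (b1 * p i j yn + b2 * p i j (Y2 t)) - p i j yn - t / 2 * gp i j) 2 :=
      BigOAtZero.congr one_pos
        (fun t _ _ => coefsplit hbsum hab (p i j yn) (p i j (Y2 t)) (gp i j) t)
        (BigOAtZero.const_mul b2 (hcoefp i j))
    have hd2 : BigOAtZero (fun t =>
        (b1 * d i j yn + b2 * d i j (Y2 t)) - d i j yn - t / 2 * gd i j) 2 :=
      BigOAtZero.congr one_pos
        (fun t _ _ => coefsplit hbsum hab (d i j yn) (d i j (Y2 t)) (gd i j) t)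
        (BigOAtZero.const_mul b2 (hcoefd i j))
    have hp1 : BigOAtZero (fun t =>
        (b1 * p i j yn + b2 * p i j (Y2 t)) * (Y t j / σ t j - 1)) 2 :=
      (hcoef0p i j).mul (hratio2 j)
    have hd1 : BigOAtZero (fun t =>
        (b1 * d i j yn + b2 * d i j (Y2 t)) * (Y t i / σ t i - 1)) 2 :=
      (hcoef0d i j).mul (hratio2 i)
    have hpp : BigOAtZero (fun t =>
        (b1 * p i j yn + b2 * p i j (Y2 t)) * Y t j / σ t j
          - p i j yn - t / 2 * gp i j) 2 :=
      BigOAtZero.congr one_pos (fun t _ _ => by ring) (hp1.add hp2)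
    have hdd : BigOAtZero (fun t =>
        (b1 * d i j yn + b2 * d i j (Y2 t)) * Y t i / σ t i
          - d i j yn - t / 2 * gd i j) 2 :=
      BigOAtZero.congr one_pos (fun t _ _ => by ring) (hd1.add hd2)
    exact BigOAtZero.congr one_pos (fun t _ _ => by ring) (hpp.sub hdd)
  have hsum2 := BigOAtZero.sum (s := Finset.univ) (fun j (_ : j ∈ Finset.univ) => hper2 j)
  have hG2 : BigOAtZero (fun t =>
      (∑ j, ((b1 * p i j yn + b2 * p i j (Y2 t)) * Y t j / σ t j
        - (b1 * d i j yn + b2 * d i j (Y2 t)) * Y t i / σ t i))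
        - fv i - t / 2 * q i) 2 := by
    refine BigOAtZero.congr one_pos (fun t _ _ => ?_) hsum2
    beta_reduce
    rw [hfveq i, hqsum i, Finset.mul_sum, ← Finset.sum_sub_distrib, ← Finset.sum_sub_distrib]
  have hfin2 := (BigOAtZero.pow 1).mul hG2
  have hsch : BigOAtZero (fun t => Y t i - yn i - t * fv i - t ^ 2 / 2 * q i) 3 := by
    refine BigOAtZero.congr hT (fun t ht htδ => ?_) hfin2
    beta_reduce
    linear_combination hY t ht htδ i
  have hcomb := hsch.sub (hex i)
  refine BigOAtZero.congr one_pos (fun t _ _ => ?_) hcomb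
  simp only [hq, hfv]
  ring
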